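/- Let H be a real Hilbert space, t0 > 0, and let ξ, M1 be positive constants with ξ ≠ 1/3. Let y : [t0,∞) → H be differentiable and let g : H → ℝ be a convex continuous function such that g(y(t) + ξ t y'(t)) ≤ M1/t³ for all t ≥ t0. Then there exist positive constants M2, M3 such that g(y(t)) ≤ M2/t³ + M3/t^{1/ξ} for all t ≥ t0. -/

import Mathlib

open Filter Topology InnerProductSpace

theorem scalar_bound (t0 ξ M1 : ℝ) (ht0 : 0 < t0) (hξ : 0 < ξ) (he3 : 1/ξ - 3 ≠ 0)
    (hM1 : 0 < M1) (φ φ' : ℝ → ℝ) (hφ : ∀ t, t0 ≤ t → HasDerivAt φ (φ' t) t)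
    (hb : ∀ t, t0 ≤ t → φ t + ξ * t * φ' t ≤ M1 / t ^ 3) (t : ℝ) (ht : t0 ≤ t) :
    t ^ (1/ξ) * φ t ≤ t0 ^ (1/ξ) * φ t0 - ((M1/ξ)/(1/ξ - 3)) * t0 ^ (1/ξ - 3)
      + ((M1/ξ)/(1/ξ - 3)) * t ^ (1/ξ - 3) := by
  set e : ℝ := 1/ξ with he
  set c : ℝ := (M1/ξ)/(e - 3) with hc
  set Φ : ℝ → ℝ := fun s => s ^ e * φ s - c * s ^ (e - 3) with hΦ
  have heξ : e * ξ = 1 := by rw [he, one_div, inv_mul_cancel₀ hξ.ne']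
  have he0 : 0 < e := by positivity
  have hΦd : ∀ s, t0 ≤ s →
      HasDerivAt Φ (e * s^(e-1) * φ s + s^e * φ' s - c * ((e-3) * s^(e-4))) s := by
    intro s hs
    have hs0 : 0 < s := lt_of_lt_of_le ht0 hs
    have h1 : HasDerivAt (fun x : ℝ => x ^ e) (e * s ^ (e-1)) s :=
      Real.hasDerivAt_rpow_const (Or.inl hs0.ne')
    have h2 := h1.mul (hφ s hs)
    have h3 : HasDerivAt (fun x : ℝ => x ^ (e-3)) ((e-3) * s ^ (e-4)) s := by
      have := Real.hasDerivAt_rpow_const (x := s) (p := e - 3) (Or.inl hs0.ne')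
      convert this using 2
      ring
    exact h2.sub (h3.const_mul c)
  have hderiv_nonpos : ∀ s ∈ interior (Set.Ici t0), deriv Φ s ≤ 0 := by
    intro s hs
    rw [interior_Ici] at hs
    have hs' : t0 ≤ s := le_of_lt hs
    have hs0 : 0 < s := lt_of_lt_of_le ht0 hs'
    rw [(hΦd s hs').deriv]
    have hkey : e * φ s + s * φ' s ≤ e * (M1 / s ^ 3) := by
      have h := mul_le_mul_of_nonneg_left (hb s hs') he0.le
      calc e * φ s + s * φ' s = e * (φ s + ξ * s * φ' s) := by
            have : e * (ξ * s * φ' s) = s * φ' s := by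
              rw [show e * (ξ * s * φ' s) = (e * ξ) * (s * φ' s) by ring, heξ, one_mul]
            linarith [this]
        _ ≤ e * (M1 / s ^ 3) := h
    have hse : s ^ e = s ^ (e-1) * s := by
      rw [← Real.rpow_add_one hs0.ne' (e-1)]
      congr 1
      ring
    have hc' : c * (e - 3) = M1 * e := by
      rw [hc, div_mul_cancel₀ _ he3, he]; ring
    have hp3 : s ^ (e-1) = s ^ (e-4) * s ^ 3 := by
      rw [← Real.rpow_natCast s 3, ← Real.rpow_add hs0]
      congr 1
      push_cast
      ring
    have hrpos : (0:ℝ) < s ^ (e-1) := Real.rpow_pos_of_pos hs0 _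
    have hmul := mul_le_mul_of_nonneg_left hkey hrpos.le
    have hrhs : s ^ (e-1) * (e * (M1 / s ^ 3)) = e * M1 * s ^ (e-4) := by
      rw [hp3]
      field_simp
    calc e * s^(e-1) * φ s + s^e * φ' s - c * ((e-3) * s^(e-4))
        = s ^ (e-1) * (e * φ s + s * φ' s) - e * M1 * s ^ (e-4) := by
          rw [hse, show c * ((e-3) * s^(e-4)) = (c * (e-3)) * s^(e-4) by ring, hc']; ring
      _ ≤ s ^ (e-1) * (e * (M1 / s ^ 3)) - e * M1 * s ^ (e-4) := by linarith
      _ = 0 := by rw [hrhs]; ring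
  have hanti : AntitoneOn Φ (Set.Ici t0) := by
    apply antitoneOn_of_deriv_nonpos (convex_Ici t0)
    · intro s hs
      exact (hΦd s hs).differentiableAt.continuousAt.continuousWithinAt
    · intro s hs
      rw [interior_Ici] at hs
      exact (hΦd s hs.le).differentiableAt.differentiableWithinAt
    · exact hderiv_nonpos
  have := hanti (Set.self_mem_Ici) (Set.mem_Ici.mpr ht) ht
  simp only [hΦ] at this
  linarith

theorem exists_affine_minorant
    {H : Type*} [NormedAddCommGroup H] [NormedSpace ℝ H]
    (g : H → ℝ) (hgconv : ConvexOn ℝ Set.univ g) (hgcont : Continuous g)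
    (x0 : H) (ε : ℝ) (hε : 0 < ε) :
    ∃ (f : H →L[ℝ] ℝ) (b : ℝ), (∀ x, f x + b ≤ g x) ∧ g x0 - ε ≤ f x0 + b := by
  set S : Set (H × ℝ) := {p : H × ℝ | p.1 ∈ Set.univ ∧ g p.1 ≤ p.2} with hS
  have hSconv : Convex ℝ S := hgconv.convex_epigraph
  have hSclosed : IsClosed S := by
    have : S = {p : H × ℝ | g p.1 ≤ p.2} := by ext p; simp [hS]
    rw [this]
    exact isClosed_le (hgcont.comp continuous_fst) continuous_snd
  have hx0 : (x0, g x0 - ε) ∉ S := by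
    simp only [hS, Set.mem_setOf_eq, Set.mem_univ, true_and, not_le]
    linarith
  obtain ⟨ℓ, u, hu, hux⟩ := geometric_hahn_banach_closed_point hSconv hSclosed hx0
  set a : ℝ := ℓ (0, 1) with ha
  have hdecomp : ∀ (x : H) (r : ℝ), ℓ (x, r) = ℓ (x, 0) + r * a := by
    intro x r
    have : (x, r) = (x, 0) + r • ((0 : H), (1 : ℝ)) := by simp
    rw [this, map_add, map_smul]; simp [ha]
  have hmem : ∀ x : H, (x, g x) ∈ S := by intro x; simp [hS]
  have ha_neg : a < 0 := by
    have h1 : ℓ (x0, g x0) < u := hu _ (hmem x0)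
    have h2 : u < ℓ (x0, g x0 - ε) := hux
    rw [hdecomp] at h1 h2
    nlinarith
  refine ⟨(-(1/a)) • (ℓ.comp (ContinuousLinearMap.inl ℝ H ℝ)), u / a, ?_, ?_⟩
  · intro x
    have h1 : ℓ (x, g x) < u := hu _ (hmem x)
    rw [hdecomp] at h1
    have hval : ((-(1/a)) • (ℓ.comp (ContinuousLinearMap.inl ℝ H ℝ))) x = -(1/a) * ℓ (x, 0) := by
      simp [ContinuousLinearMap.smul_apply]
    rw [hval]
    have ha' : a ≠ 0 := ne_of_lt ha_neg
    have heq : -(1/a) * ℓ (x, 0) + u / a = (u - ℓ (x, 0)) / a := by field_simp; ring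
    rw [heq, div_le_iff_of_neg ha_neg]
    nlinarith
  · have h2 : u < ℓ (x0, g x0 - ε) := hux
    rw [hdecomp] at h2
    have hval : ((-(1/a)) • (ℓ.comp (ContinuousLinearMap.inl ℝ H ℝ))) x0 = -(1/a) * ℓ (x0, 0) := by
      simp [ContinuousLinearMap.smul_apply]
    rw [hval]
    have ha' : a ≠ 0 := ne_of_lt ha_neg
    have heq : -(1/a) * ℓ (x0, 0) + u / a = (u - ℓ (x0, 0)) / a := by field_simp; ring
    rw [heq, le_div_iff_of_neg ha_neg]
    nlinarith

theorem stmt0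
    {H : Type*} [NormedAddCommGroup H] [InnerProductSpace ℝ H] [CompleteSpace H]
    (t0 ξ M1 : ℝ) (ht0 : 0 < t0) (hξ : 0 < ξ) (hξ' : ξ ≠ 1 / 3) (hM1 : 0 < M1)
    (y : ℝ → H) (hy : ∀ t, t0 ≤ t → DifferentiableAt ℝ y t)
    (g : H → ℝ) (hgconv : ConvexOn ℝ Set.univ g) (hgcont : Continuous g)
    (hbound : ∀ t, t0 ≤ t → g (y t + (ξ * t) • deriv y t) ≤ M1 / t ^ 3) :
    ∃ M2 M3 : ℝ, 0 < M2 ∧ 0 < M3 ∧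
      ∀ t, t0 ≤ t → g (y t) ≤ M2 / t ^ 3 + M3 / t ^ (1 / ξ) := by
  set e : ℝ := 1/ξ with he
  have he3 : e - 3 ≠ 0 := by
    rw [sub_ne_zero, he]
    intro h
    apply hξ'
    field_simp at h
    linarith
  set c : ℝ := (M1/ξ)/(e - 3) with hc
  set G0 : ℝ := g (y t0) with hG0
  refine ⟨|c| + 1, |t0 ^ e * G0 - c * t0 ^ (e-3)| + 1, by positivity, by positivity, ?_⟩
  intro t ht
  set M2 : ℝ := |c| + 1 with hM2
  set M3 : ℝ := |t0 ^ e * G0 - c * t0 ^ (e-3)| + 1 with hM3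
  have htpos : 0 < t := lt_of_lt_of_le ht0 ht
  apply le_of_forall_pos_le_add
  intro ε hε
  obtain ⟨f, b, hmin, htouch⟩ := exists_affine_minorant g hgconv hgcont (y t) ε hε
  set φ : ℝ → ℝ := fun s => f (y s) + b with hφ
  set φ' : ℝ → ℝ := fun s => f (deriv y s) with hφ'
  have hφd : ∀ s, t0 ≤ s → HasDerivAt φ (φ' s) s := by
    intro s hs
    have h := (hy s hs).hasDerivAt
    have h2 := f.hasFDerivAt.comp_hasDerivAt s h
    exact h2.add_const b
  have hφb : ∀ s, t0 ≤ s → φ s + ξ * s * φ' s ≤ M1 / s ^ 3 := by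
    intro s hs
    have hlin : φ s + ξ * s * φ' s = f (y s + (ξ * s) • deriv y s) + b := by
      rw [map_add, map_smul]
      simp [hφ, hφ']
      ring
    rw [hlin]
    exact le_trans (hmin _) (hbound s hs)
  have hkey := scalar_bound t0 ξ M1 ht0 hξ (by rwa [← he]) hM1 φ φ' hφd hφb t ht
  rw [← he, ← hc] at hkey
  have hφt0 : φ t0 ≤ G0 := hmin (y t0)
  have ht0e : (0:ℝ) < t0 ^ e := Real.rpow_pos_of_pos ht0 _
  have hte : (0:ℝ) < t ^ e := Real.rpow_pos_of_pos htpos _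
  have hte3 : (0:ℝ) < t ^ (e-3) := Real.rpow_pos_of_pos htpos _
  have h1 : t ^ e * φ t ≤ M3 + M2 * t ^ (e-3) := by
    have h2 : t0 ^ e * φ t0 ≤ t0 ^ e * G0 :=
      mul_le_mul_of_nonneg_left hφt0 ht0e.le
    have h3 : t0 ^ e * G0 - c * t0 ^ (e-3) ≤ M3 := by
      rw [hM3]
      have := le_abs_self (t0 ^ e * G0 - c * t0 ^ (e-3))
      linarith
    have h4 : c * t ^ (e-3) ≤ M2 * t ^ (e-3) :=
      mul_le_mul_of_nonneg_right (by rw [hM2]; linarith [le_abs_self c]) hte3.le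
    linarith
  have ht3 : t ^ (e-3) = t ^ e / t ^ 3 := by
    rw [← Real.rpow_natCast t 3, ← Real.rpow_sub htpos]
    norm_num
  have h5 : M3 + M2 * t ^ (e-3) = (M2 / t ^ 3 + M3 / t ^ e) * t ^ e := by
    rw [ht3]
    field_simp
    ring
  have h6 : φ t ≤ M2 / t ^ 3 + M3 / t ^ e := by
    rw [← mul_le_mul_iff_of_pos_right hte]
    calc φ t * t ^ e = t ^ e * φ t := by ring
      _ ≤ M3 + M2 * t ^ (e-3) := h1
      _ = (M2 / t ^ 3 + M3 / t ^ e) * t ^ e := h5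
  have h7 : g (y t) - ε ≤ φ t := htouch
  linarith
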